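/- The group with presentation ⟨a, b, c | a^3 = b^4 = c^2 = 1, b a b^{-1} = a^{-1}, c a c = a^{-1}, c b c = b^{-1}⟩ has exactly 24 elements. -/

import Mathlib

set_option maxRecDepth 10000

/-- Relators for the presentation
`⟨a, b, c | a³ = b⁴ = c² = 1, bab⁻¹ = a⁻¹, cac = a⁻¹, cbc = b⁻¹⟩`,
with `a, b, c` the generators indexed by `0, 1, 2` respectively. -/
def c3rd4Rels : Set (FreeGroup (Fin 3)) :=
  {FreeGroup.of 0 ^ 3, FreeGroup.of 1 ^ 4, FreeGroup.of 2 ^ 2,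
    FreeGroup.of 1 * FreeGroup.of 0 * (FreeGroup.of 1)⁻¹ * FreeGroup.of 0,
    FreeGroup.of 2 * FreeGroup.of 0 * FreeGroup.of 2 * FreeGroup.of 0,
    FreeGroup.of 2 * FreeGroup.of 1 * FreeGroup.of 2 * FreeGroup.of 1}

namespace C3rD4Aux

abbrev G := PresentedGroup c3rd4Rels

noncomputable def α : G := PresentedGroup.of 0
noncomputable def β : G := PresentedGroup.of 1
noncomputable def γ : G := PresentedGroup.of 2

lemma rel_one {r : FreeGroup (Fin 3)} (h : r ∈ c3rd4Rels) :
    PresentedGroup.mk c3rd4Rels r = 1 := by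
  exact (QuotientGroup.eq_one_iff r).mpr (Subgroup.subset_normalClosure h)

lemma hα3 : α ^ 3 = 1 := by
  have := rel_one (r := FreeGroup.of 0 ^ 3) (by simp [c3rd4Rels])
  simpa [α, PresentedGroup.of] using this

lemma hβ4 : β ^ 4 = 1 := by
  have := rel_one (r := FreeGroup.of 1 ^ 4) (by simp [c3rd4Rels])
  simpa [β, PresentedGroup.of] using this

lemma hγ2 : γ ^ 2 = 1 := by
  have := rel_one (r := FreeGroup.of 2 ^ 2) (by simp [c3rd4Rels])
  simpa [γ, PresentedGroup.of] using this

lemma hγinv : γ⁻¹ = γ := by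
  have := hγ2; rw [pow_two] at this
  exact inv_eq_of_mul_eq_one_right this

lemma hβα : β * α * β⁻¹ = α⁻¹ := by
  have := rel_one
    (r := FreeGroup.of 1 * FreeGroup.of 0 * (FreeGroup.of 1)⁻¹ * FreeGroup.of 0)
    (by simp [c3rd4Rels])
  simp only [map_mul, map_inv] at this
  exact mul_eq_one_iff_eq_inv.mp this

lemma hγα : γ * α * γ⁻¹ = α⁻¹ := by
  have := rel_one
    (r := FreeGroup.of 2 * FreeGroup.of 0 * FreeGroup.of 2 * FreeGroup.of 0)
    (by simp [c3rd4Rels])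
  simp only [map_mul] at this
  rw [hγinv]
  exact mul_eq_one_iff_eq_inv.mp this

lemma hγβ : γ * β * γ⁻¹ = β⁻¹ := by
  have := rel_one
    (r := FreeGroup.of 2 * FreeGroup.of 1 * FreeGroup.of 2 * FreeGroup.of 1)
    (by simp [c3rd4Rels])
  simp only [map_mul] at this
  rw [hγinv]
  exact mul_eq_one_iff_eq_inv.mp this

lemma conj_pow {x y : G} (h : x * y * x⁻¹ = y⁻¹) (n : ℕ) :
    x * y ^ n = (y ^ n)⁻¹ * x := by
  induction n with
  | zero => simp
  | succ n ih =>
    have h1 : x * y ^ (n + 1) = (x * y * x⁻¹) * (x * y ^ n) := by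
      rw [pow_succ']; group
    rw [h1, h, ih, ← mul_assoc, ← mul_inv_rev, ← pow_succ]

lemma pow_mod {x : G} {m : ℕ} (hx : x ^ m = 1) (n : ℕ) : x ^ (n % m) = x ^ n := by
  conv_rhs => rw [← Nat.div_add_mod n m, pow_add, pow_mul, hx, one_pow, one_mul]

lemma pow_val_add {x : G} {m : ℕ} [NeZero m] (hx : x ^ m = 1) (u v : ZMod m) :
    x ^ (u + v).val = x ^ u.val * x ^ v.val := by
  rw [ZMod.val_add, pow_mod hx, pow_add]

lemma pow_val_neg {x : G} {m : ℕ} [NeZero m] (hx : x ^ m = 1) (u : ZMod m) :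
    x ^ (-u).val = (x ^ u.val)⁻¹ := by
  apply eq_inv_of_mul_eq_one_right
  rw [← pow_val_add hx, add_neg_cancel, ZMod.val_zero, pow_zero]

noncomputable def φ : ZMod 3 × ZMod 4 × ZMod 2 → G :=
  fun p => α ^ p.1.val * (β ^ p.2.1.val * γ ^ p.2.2.val)

lemma Lα (p : ZMod 3 × ZMod 4 × ZMod 2) :
    α * φ p = φ (p.1 + 1, p.2.1, p.2.2) := by
  have h1 : α ^ (p.1 + 1).val = α * α ^ p.1.val := by
    rw [add_comm, pow_val_add hα3, show ((1 : ZMod 3).val) = 1 from rfl, pow_one]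
  show α * (α ^ p.1.val * _) = α ^ (p.1 + 1).val * _
  rw [h1, mul_assoc]

lemma Lβ (p : ZMod 3 × ZMod 4 × ZMod 2) :
    β * φ p = φ (-p.1, p.2.1 + 1, p.2.2) := by
  have hb : β ^ (p.2.1 + 1).val = β * β ^ p.2.1.val := by
    rw [add_comm, pow_val_add hβ4, show ((1 : ZMod 4).val) = 1 from rfl, pow_one]
  show β * (α ^ p.1.val * (β ^ p.2.1.val * _))
      = α ^ (-p.1).val * (β ^ (p.2.1 + 1).val * _)
  rw [← mul_assoc, conj_pow hβα, ← pow_val_neg hα3, mul_assoc, ← mul_assoc β, ← hb]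

lemma Lγ (p : ZMod 3 × ZMod 4 × ZMod 2) :
    γ * φ p = φ (-p.1, -p.2.1, p.2.2 + 1) := by
  have hc : γ ^ (p.2.2 + 1).val = γ * γ ^ p.2.2.val := by
    rw [add_comm, pow_val_add hγ2, show ((1 : ZMod 2).val) = 1 from rfl, pow_one]
  show γ * (α ^ p.1.val * (β ^ p.2.1.val * γ ^ p.2.2.val))
      = α ^ (-p.1).val * (β ^ (-p.2.1).val * γ ^ (p.2.2 + 1).val)
  rw [← mul_assoc, conj_pow hγα, ← pow_val_neg hα3, mul_assoc, ← mul_assoc γ,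
    conj_pow hγβ, ← pow_val_neg hβ4, mul_assoc, ← hc]

lemma αinv : α⁻¹ = α * α := by
  apply inv_eq_of_mul_eq_one_right
  have h := hα3
  rwa [pow_succ, pow_two, mul_assoc] at h

lemma βinv : β⁻¹ = β * (β * β) := by
  apply inv_eq_of_mul_eq_one_right
  have h := hβ4
  rwa [pow_succ, pow_succ, pow_two, mul_assoc, mul_assoc] at h

lemma one_mem_range : (1 : G) ∈ Set.range φ :=
  ⟨(0, 0, 0), by simp [φ, ZMod.val_zero]⟩

lemma key (w : FreeGroup (Fin 3)) :
    ∀ g ∈ Set.range φ, PresentedGroup.mk c3rd4Rels w * g ∈ Set.range φ := by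
  induction w using FreeGroup.induction_on with
  | C1 => intro g hg; simpa using hg
  | of x =>
    intro g hg
    obtain ⟨p, rfl⟩ := hg
    fin_cases x
    · exact ⟨_, (Lα p).symm⟩
    · exact ⟨_, (Lβ p).symm⟩
    · exact ⟨_, (Lγ p).symm⟩
  | inv_of x _ =>
    intro g hg
    obtain ⟨p, rfl⟩ := hg
    fin_cases x
    · show α⁻¹ * φ p ∈ Set.range φ
      rw [αinv, mul_assoc, Lα p, Lα]
      exact ⟨_, rfl⟩
    · show β⁻¹ * φ p ∈ Set.range φ
      rw [βinv, mul_assoc, mul_assoc, Lβ p, Lβ, Lβ]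
      exact ⟨_, rfl⟩
    · show γ⁻¹ * φ p ∈ Set.range φ
      rw [hγinv, Lγ]
      exact ⟨_, rfl⟩
  | mul x y ihx ihy =>
    intro g hg
    rw [map_mul, mul_assoc]
    exact ihx _ (ihy g hg)

lemma φ_surjective : Function.Surjective φ := by
  intro g
  obtain ⟨w, rfl⟩ := PresentedGroup.mk_surjective c3rd4Rels g
  have := key w 1 one_mem_range
  rw [mul_one] at this
  exact this

open Equiv in
def A : Perm (Fin 7) := swap 0 1 * swap 1 2
open Equiv in
def B : Perm (Fin 7) := swap 0 1 * (swap 3 4 * swap 4 5 * swap 5 6)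
open Equiv in
def C : Perm (Fin 7) := swap 0 1 * swap 3 5

def fgen : Fin 3 → Equiv.Perm (Fin 7) := ![A, B, C]

lemma relcheck : ∀ r ∈ c3rd4Rels, FreeGroup.lift fgen r = 1 := by
  intro r hr
  simp only [c3rd4Rels, Set.mem_insert_iff, Set.mem_singleton_iff] at hr
  rcases hr with rfl | rfl | rfl | rfl | rfl | rfl <;>
    simp only [map_mul, map_pow, map_inv, FreeGroup.lift_apply_of, fgen,
      Matrix.cons_val_zero, Matrix.cons_val_one, Matrix.head_cons,
      Matrix.cons_val_two, Matrix.tail_cons] <;> decide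

noncomputable def ψ : G →* Equiv.Perm (Fin 7) := PresentedGroup.toGroup relcheck

lemma ψφ (p : ZMod 3 × ZMod 4 × ZMod 2) :
    ψ (φ p) = A ^ p.1.val * (B ^ p.2.1.val * C ^ p.2.2.val) := by
  have hA : ψ α = A := PresentedGroup.toGroup.of relcheck
  have hB : ψ β = B := PresentedGroup.toGroup.of relcheck
  have hC : ψ γ = C := PresentedGroup.toGroup.of relcheck
  simp [φ, map_mul, map_pow, hA, hB, hC]

lemma f_injective :
    Function.Injective
      (fun p : ZMod 3 × ZMod 4 × ZMod 2 => A ^ p.1.val * (B ^ p.2.1.val * C ^ p.2.2.val)) := by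
  decide

lemma φ_injective : Function.Injective φ := by
  intro p q h
  apply f_injective
  simpa only [ψφ] using congrArg ψ h

end C3rD4Aux

/-- The group `⟨a, b, c | a³ = b⁴ = c² = 1, bab⁻¹ = a⁻¹, cac = a⁻¹, cbc = b⁻¹⟩`
(abstractly `C₃ ⋊ D₄`) has exactly 24 elements. -/
theorem card_c3rd4_presentation : Nat.card (PresentedGroup c3rd4Rels) = 24 := by
  have hb : Function.Bijective C3rD4Aux.φ := ⟨C3rD4Aux.φ_injective, C3rD4Aux.φ_surjective⟩
  rw [← Nat.card_eq_of_bijective _ hb]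
  simp [Nat.card_prod]
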